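/- For T > 0 let V(T) = ∫∫ (round(x + y))² dμ(x) dν_T(y), where μ is the uniform probability measure on [−1/2, 1/2], ν_T is the Gaussian measure on ℝ with mean 0 and variance T, and round(x) denotes the integer nearest to x (i.e. round(x) = ⌊x + 1/2⌋). Then V(T)/√T converges to √(2/π) as T → 0⁺; equivalently, √(π/(2T))·V(T) → 1 as T → 0⁺. -/

import Mathlib

open MeasureTheory ProbabilityTheory Real

section Aux

open Set Filter

lemma measurable_round_real : Measurable (fun x : ℝ => ((round x : ℤ) : ℝ)) := by
  have h : Measurable (fun x : ℝ => (⌊x + 1/2⌋ : ℤ)) :=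
    Int.measurable_floor.comp (measurable_id.add_const _)
  have : (fun x : ℝ => ((round x : ℤ) : ℝ)) = fun x => ((⌊x + 1/2⌋ : ℤ) : ℝ) := by
    funext x; rw [round_eq]
  rw [this]
  exact measurable_from_top.comp h

lemma integrableOn_round_sq (y : ℝ) :
    IntegrableOn (fun x : ℝ => ((round (x + y) : ℤ) : ℝ) ^ 2)
      (Icc (-(1/2) : ℝ) (1/2)) volume := by
  have hmeas : Measurable (fun x : ℝ => ((round (x + y) : ℤ) : ℝ) ^ 2) :=
    (measurable_round_real.comp (measurable_id.add_const y)).pow_const 2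
  refine Integrable.mono' (g := fun _ => ((|y| + 1) ^ 2 : ℝ))
    (integrable_const _) hmeas.aestronglyMeasurable ?_
  filter_upwards [ae_restrict_mem measurableSet_Icc] with x hx
  rw [Real.norm_eq_abs]
  have h1 : |((round (x + y) : ℤ) : ℝ)| ≤ |x + y| + 1/2 := by
    have := abs_sub_round (x + y)
    have h2 : |((round (x + y) : ℤ) : ℝ)| ≤ |x + y| + |x + y - round (x+y)| := by
      have := abs_sub_abs_le_abs_sub ((round (x+y) : ℝ)) (x + y)
      have h3 := abs_sub_comm ((round (x+y) : ℝ)) (x + y)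
      calc |((round (x + y) : ℤ) : ℝ)| ≤ |x + y| + |(round (x+y) : ℝ) - (x+y)| := by
            have := abs_add_le (x + y) ((round (x+y) : ℝ) - (x+y)); simpa using this
        _ = |x + y| + |x + y - round (x+y)| := by rw [abs_sub_comm]
    linarith
  have hx1 : |x| ≤ 1/2 := by
    rw [abs_le]; exact ⟨by linarith [hx.1], hx.2⟩
  have h4 : |x + y| ≤ |x| + |y| := abs_add_le x y
  have h5 : |((round (x + y) : ℤ) : ℝ)| ^ 2 ≤ (|y| + 1) ^ 2 := by
    apply pow_le_pow_left₀ (abs_nonneg _)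
    linarith
  calc |((round (x + y) : ℤ) : ℝ) ^ 2| = |((round (x + y) : ℤ) : ℝ)| ^ 2 := by
        rw [abs_pow]
    _ ≤ (|y| + 1) ^ 2 := h5

lemma round_sq_inner_le (y : ℝ) :
    ∫ x in Icc (-(1/2) : ℝ) (1/2), ((round (x + y) : ℤ) : ℝ) ^ 2 ≤ (|y| + 1) ^ 2 := by
  have h := integrableOn_round_sq y
  calc ∫ x in Icc (-(1/2) : ℝ) (1/2), ((round (x + y) : ℤ) : ℝ) ^ 2
      ≤ ∫ _ in Icc (-(1/2) : ℝ) (1/2), ((|y| + 1) ^ 2 : ℝ) := by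
        refine setIntegral_mono_on h (integrable_const _) measurableSet_Icc ?_
        intro x hx
        rw [← sq_abs ((round (x + y) : ℤ) : ℝ)]
        apply pow_le_pow_left₀ (abs_nonneg _)
        have h1 : |x + y - round (x+y)| ≤ 1/2 := abs_sub_round (x + y)
        have h2 : |((round (x + y) : ℤ) : ℝ)| ≤ |x + y| + 1/2 := by
          have := abs_add_le (x + y) ((round (x+y) : ℝ) - (x+y))
          simp only [add_sub_cancel] at this
          rw [abs_sub_comm] at this
          linarith
        have hx1 : |x| ≤ 1/2 := by rw [abs_le]; exact ⟨by linarith [hx.1], hx.2⟩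
        have h4 : |x + y| ≤ |x| + |y| := abs_add_le x y
        linarith
    _ = (|y| + 1) ^ 2 := by
        rw [setIntegral_const]
        rw [Real.volume_real_Icc]
        norm_num

lemma round_sq_inner_nonneg (y : ℝ) :
    0 ≤ ∫ x in Icc (-(1/2) : ℝ) (1/2), ((round (x + y) : ℤ) : ℝ) ^ 2 :=
  setIntegral_nonneg measurableSet_Icc (fun x _ => sq_nonneg _)

lemma round_sq_inner_eq {y : ℝ} (hy : |y| ≤ 1) :
    ∫ x in Icc (-(1/2) : ℝ) (1/2), ((round (x + y) : ℤ) : ℝ) ^ 2 = |y| := by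
  rw [abs_le] at hy
  rcases le_or_gt 0 y with hy0 | hy0
  · -- y ∈ [0,1]
    have key : ∫ x in Icc (-(1/2) : ℝ) (1/2), ((round (x + y) : ℤ) : ℝ) ^ 2
        = ∫ x in Icc (-(1/2) : ℝ) (1/2), (Ici (1/2 - y)).indicator (fun _ => (1:ℝ)) x := by
      apply setIntegral_congr_ae measurableSet_Icc
      have hne : ∀ᵐ x : ℝ, x ≠ 3/2 - y := by
        rw [ae_iff]
        have : {x : ℝ | ¬ x ≠ 3/2 - y} = {3/2 - y} := by ext x; simp
        rw [this]; exact volume_singleton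
      filter_upwards [hne] with x hx hxm
      by_cases hge : 1/2 - y ≤ x
      · rw [Set.indicator_apply, if_pos (mem_Ici.mpr hge)]
        have hr : round (x + y) = 1 := by
          rw [round_eq, Int.floor_eq_iff]
          constructor
          · push_cast; linarith
          · push_cast
            have : x + y < 3/2 := lt_of_le_of_ne (by linarith [hxm.2, hy.2]) (by
              intro h; apply hx; linarith)
            linarith
        rw [hr]; norm_num
      · rw [Set.indicator_apply, if_neg (by simpa [mem_Ici] using hge)]
        push_neg at hge
        have hr : round (x + y) = 0 := by
          rw [round_eq, Int.floor_eq_iff]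
          constructor
          · push_cast; linarith [hxm.1]
          · push_cast; linarith
        rw [hr]; norm_num
    rw [key, setIntegral_indicator measurableSet_Ici]
    have hset : Icc (-(1/2) : ℝ) (1/2) ∩ Ici (1/2 - y) = Icc (1/2 - y) (1/2) := by
      ext x
      simp only [mem_inter_iff, mem_Icc, mem_Ici]
      constructor
      · rintro ⟨⟨_, h2⟩, h3⟩; exact ⟨h3, h2⟩
      · rintro ⟨h1, h2⟩; exact ⟨⟨by linarith [hy.2], h2⟩, h1⟩
    rw [hset, setIntegral_const, Real.volume_real_Icc_of_le (by linarith)]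
    rw [abs_of_nonneg hy0]
    simp
  · -- y ∈ [-1, 0)
    have key : ∫ x in Icc (-(1/2) : ℝ) (1/2), ((round (x + y) : ℤ) : ℝ) ^ 2
        = ∫ x in Icc (-(1/2) : ℝ) (1/2), (Iio (-(1/2) - y)).indicator (fun _ => (1:ℝ)) x := by
      apply setIntegral_congr_fun measurableSet_Icc
      intro x hxm
      by_cases hlt : x < -(1/2) - y
      · rw [Set.indicator_apply, if_pos (mem_Iio.mpr hlt)]
        show ((round (x + y) : ℤ) : ℝ) ^ 2 = 1
        have hr : round (x + y) = -1 := by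
          rw [round_eq, Int.floor_eq_iff]
          constructor
          · push_cast; linarith [hxm.1, hy.1]
          · push_cast; linarith
        rw [hr]; norm_num
      · rw [Set.indicator_apply, if_neg (by simpa [mem_Iio] using hlt)]
        push_neg at hlt
        show ((round (x + y) : ℤ) : ℝ) ^ 2 = 0
        have hr : round (x + y) = 0 := by
          rw [round_eq, Int.floor_eq_iff]
          constructor
          · push_cast; linarith
          · push_cast; linarith [hxm.2]
        rw [hr]; norm_num
    rw [key, setIntegral_indicator measurableSet_Iio]
    have hset : Icc (-(1/2) : ℝ) (1/2) ∩ Iio (-(1/2) - y) = Ico (-(1/2) : ℝ) (-(1/2) - y) := by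
      ext x
      simp only [mem_inter_iff, mem_Icc, mem_Iio, mem_Ico]
      constructor
      · rintro ⟨⟨h1, _⟩, h3⟩; exact ⟨h1, h3⟩
      · rintro ⟨h1, h2⟩; exact ⟨⟨h1, by linarith [hy.1]⟩, h2⟩
    rw [hset, setIntegral_const, Real.volume_real_Ico_of_le (by linarith)]
    rw [abs_of_neg hy0]
    simp; ring

lemma round_sq_inner_abs_le (y : ℝ) :
    abs ((∫ x in Icc (-(1/2) : ℝ) (1/2), ((round (x + y) : ℤ) : ℝ) ^ 2) - abs y) ≤ 5 * y ^ 2 := by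
  rcases le_or_gt (|y|) 1 with hy | hy
  · rw [round_sq_inner_eq hy]; simp; positivity
  · have h1 := round_sq_inner_le y
    have h2 := round_sq_inner_nonneg y
    have hy1 : 1 < |y| := hy
    have hysq : |y| ≤ y ^ 2 := by
      calc |y| = |y| * 1 := by ring
        _ ≤ |y| * |y| := by nlinarith [abs_nonneg y]
        _ = y ^ 2 := by rw [← sq_abs]; ring
    have h3 : (|y| + 1) ^ 2 ≤ 4 * y ^ 2 := by
      have : |y| + 1 ≤ 2 * |y| := by linarith
      calc (|y| + 1)^2 ≤ (2 * |y|)^2 := by nlinarith [abs_nonneg y]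
        _ = 4 * y ^ 2 := by rw [mul_pow, ← sq_abs y]; ring
    rw [abs_le]
    constructor
    · nlinarith
    · nlinarith

end Aux

section Gauss

open Set Filter

lemma integral_Ioi_mul_exp_neg_mul_sq {b : ℝ} (hb : 0 < b) :
    ∫ x in Set.Ioi (0:ℝ), x * rexp (-b * x^2) = (2*b)⁻¹ := by
  have A : ∀ x ∈ Set.Ici (0:ℝ),
      HasDerivAt (fun x : ℝ => -(2*b)⁻¹ * rexp (-b*x^2)) (x * rexp (-b*x^2)) x := by
    intro x _
    have h := (((hasDerivAt_pow 2 x).const_mul (-b)).exp).const_mul (-(2*b)⁻¹)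
    refine h.congr_deriv ?_
    field_simp
    ring
  have B : Filter.Tendsto (fun x : ℝ => -(2*b)⁻¹ * rexp (-b*x^2)) Filter.atTop (nhds 0) := by
    have h1 : Filter.Tendsto (fun x : ℝ => -b * x^2) Filter.atTop Filter.atBot :=
      (tendsto_pow_atTop two_ne_zero).const_mul_atTop_of_neg (neg_lt_zero.2 hb)
    have h2 := (Real.tendsto_exp_atBot.comp h1).const_mul (-(2*b)⁻¹)
    simpa using h2
  have h := integral_Ioi_of_hasDerivAt_of_tendsto' A
    ((integrable_mul_exp_neg_mul_sq hb).integrableOn) B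
  rw [h]
  norm_num

lemma integrable_sq_mul_exp_neg_mul_sq {b : ℝ} (hb : 0 < b) :
    Integrable (fun x : ℝ => x^2 * rexp (-b * x^2)) := by
  refine ((integrable_exp_neg_mul_sq (half_pos hb)).const_mul (2/b)).mono'
    ?_ ?_
  · exact ((continuous_pow 2).mul
      (Real.continuous_exp.comp (continuous_const.mul (continuous_pow 2)))).aestronglyMeasurable
  · filter_upwards with x
    rw [Real.norm_eq_abs, abs_of_nonneg (by positivity)]
    have h1 : (b/2) * x^2 ≤ rexp ((b/2) * x^2) := by
      have := Real.add_one_le_exp ((b/2) * x^2)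
      nlinarith [sq_nonneg x]
    have h2 : x^2 ≤ (2/b) * rexp ((b/2) * x^2) := by
      have hb' : 0 < 2/b := by positivity
      calc x^2 = (2/b) * ((b/2) * x^2) := by field_simp
        _ ≤ (2/b) * rexp ((b/2) * x^2) := mul_le_mul_of_nonneg_left h1 hb'.le
    calc x^2 * rexp (-b * x^2) ≤ ((2/b) * rexp ((b/2) * x^2)) * rexp (-b * x^2) := by
          apply mul_le_mul_of_nonneg_right h2 (Real.exp_nonneg _)
      _ = (2/b) * rexp (-(b/2) * x^2) := by
          rw [mul_assoc, ← Real.exp_add]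
          congr 1
          ring

variable {T : ℝ}

lemma gaussian_integral_eq (hT : 0 < T) (f : ℝ → ℝ) :
    ∫ y, f y ∂(gaussianReal 0 T.toNNReal)
      = ∫ y, gaussianPDFReal 0 T.toNNReal y * f y := by
  have hv : T.toNNReal ≠ 0 := by
    simp [Real.toNNReal_eq_zero, not_le, hT]
  rw [gaussianReal_of_var_ne_zero 0 hv]
  have hd : gaussianPDF 0 T.toNNReal
      = fun x => ((gaussianPDFReal 0 T.toNNReal x).toNNReal : ENNReal) := rfl
  rw [hd, integral_withDensity_eq_integral_smul
    ((measurable_gaussianPDFReal 0 T.toNNReal).real_toNNReal) f]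
  congr 1
  funext y
  rw [NNReal.smul_def, Real.coe_toNNReal _ (gaussianPDFReal_nonneg 0 T.toNNReal y)]
  rfl

lemma gaussian_integrable_iff (hT : 0 < T) (f : ℝ → ℝ) :
    Integrable f (gaussianReal 0 T.toNNReal)
      ↔ Integrable (fun y => gaussianPDFReal 0 T.toNNReal y * f y) volume := by
  have hv : T.toNNReal ≠ 0 := by
    simp [Real.toNNReal_eq_zero, not_le, hT]
  rw [gaussianReal_of_var_ne_zero 0 hv]
  have hd : gaussianPDF 0 T.toNNReal
      = fun x => ((gaussianPDFReal 0 T.toNNReal x).toNNReal : ENNReal) := rfl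
  rw [hd, integrable_withDensity_iff_integrable_smul
    ((measurable_gaussianPDFReal 0 T.toNNReal).real_toNNReal)]
  constructor <;> intro h <;> refine h.congr (Filter.Eventually.of_forall fun y => ?_) <;>
    simp only [NNReal.smul_def, Real.coe_toNNReal _ (gaussianPDFReal_nonneg 0 T.toNNReal y),
      smul_eq_mul]

lemma gaussian_pdf_eq (hT : 0 < T) (y : ℝ) :
    gaussianPDFReal 0 T.toNNReal y
      = (Real.sqrt (2*π*T))⁻¹ * rexp (-(2*T)⁻¹ * y^2) := by
  have hvT : (T.toNNReal : ℝ) = T := Real.coe_toNNReal T hT.le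
  rw [gaussianPDFReal, hvT]
  congr 1
  rw [sub_zero]
  congr 1
  field_simp

lemma gaussian_sq_integrable (hT : 0 < T) :
    Integrable (fun y : ℝ => y^2) (gaussianReal 0 T.toNNReal) := by
  rw [gaussian_integrable_iff hT]
  have hb : 0 < (2*T)⁻¹ := by positivity
  have : (fun y : ℝ => gaussianPDFReal 0 T.toNNReal y * y^2)
      = fun y => (Real.sqrt (2*π*T))⁻¹ * (y^2 * rexp (-(2*T)⁻¹ * y^2)) := by
    funext y
    rw [gaussian_pdf_eq hT]
    ring
  rw [this]
  exact (integrable_sq_mul_exp_neg_mul_sq hb).const_mul _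

lemma gaussian_sq_le (hT : 0 < T) :
    ∫ y, y^2 ∂(gaussianReal 0 T.toNNReal) ≤ 6*T := by
  have hb2 : 0 < (2*T)⁻¹ := by positivity
  have hb4 : 0 < (4*T)⁻¹ := by positivity
  have hT' : T ≠ 0 := hT.ne'
  rw [gaussian_integral_eq hT]
  have hle : ∀ y : ℝ, gaussianPDFReal 0 T.toNNReal y * y^2
      ≤ (Real.sqrt (2*π*T))⁻¹ * (4*T * rexp (-(4*T)⁻¹ * y^2)) := by
    intro y
    rw [gaussian_pdf_eq hT]
    have h1 : (4*T)⁻¹ * y^2 ≤ rexp ((4*T)⁻¹ * y^2) := by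
      have := Real.add_one_le_exp ((4*T)⁻¹ * y^2)
      linarith
    have h2 : y^2 ≤ 4*T * rexp ((4*T)⁻¹ * y^2) := by
      have h4T : 0 < 4*T := by positivity
      calc y^2 = (4*T) * ((4*T)⁻¹ * y^2) := by field_simp
        _ ≤ 4*T * rexp ((4*T)⁻¹ * y^2) := by
            apply mul_le_mul_of_nonneg_left h1 h4T.le
    have h3 : rexp (-(2*T)⁻¹ * y^2) * y^2 ≤ 4*T * rexp (-(4*T)⁻¹ * y^2) := by
      calc rexp (-(2*T)⁻¹ * y^2) * y^2
          ≤ rexp (-(2*T)⁻¹ * y^2) * (4*T * rexp ((4*T)⁻¹ * y^2)) := by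
            apply mul_le_mul_of_nonneg_left h2 (Real.exp_nonneg _)
        _ = 4*T * (rexp (-(2*T)⁻¹ * y^2) * rexp ((4*T)⁻¹ * y^2)) := by ring
        _ = 4*T * rexp (-(4*T)⁻¹ * y^2) := by
            rw [← Real.exp_add]
            congr 2
            field_simp
            ring
    calc (Real.sqrt (2*π*T))⁻¹ * rexp (-(2*T)⁻¹ * y^2) * y^2
        = (Real.sqrt (2*π*T))⁻¹ * (rexp (-(2*T)⁻¹ * y^2) * y^2) := by ring
      _ ≤ (Real.sqrt (2*π*T))⁻¹ * (4*T * rexp (-(4*T)⁻¹ * y^2)) := by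
          apply mul_le_mul_of_nonneg_left h3 (by positivity)
  have hint1 : Integrable (fun y : ℝ => gaussianPDFReal 0 T.toNNReal y * y^2) volume := by
    rw [← gaussian_integrable_iff hT]
    exact gaussian_sq_integrable hT
  have hint2 : Integrable
      (fun y : ℝ => (Real.sqrt (2*π*T))⁻¹ * (4*T * rexp (-(4*T)⁻¹ * y^2))) volume := by
    exact ((integrable_exp_neg_mul_sq hb4).const_mul _).const_mul _
  calc ∫ y, gaussianPDFReal 0 T.toNNReal y * y^2
      ≤ ∫ y, (Real.sqrt (2*π*T))⁻¹ * (4*T * rexp (-(4*T)⁻¹ * y^2)) :=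
        integral_mono hint1 hint2 hle
    _ = (Real.sqrt (2*π*T))⁻¹ * (4*T * ∫ y : ℝ, rexp (-(4*T)⁻¹ * y^2)) := by
        rw [integral_const_mul, integral_const_mul]
    _ = (Real.sqrt (2*π*T))⁻¹ * (4*T * Real.sqrt (π / (4*T)⁻¹)) := by
        rw [integral_gaussian]
    _ ≤ 6*T := by
        have h1 : π / (4*T)⁻¹ = 2*(2*π*T) := by field_simp; ring
        rw [h1, Real.sqrt_mul (by norm_num : (0:ℝ) ≤ 2)]
        have h2 : 0 < Real.sqrt (2*π*T) := Real.sqrt_pos.mpr (by positivity)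
        rw [show (Real.sqrt (2*π*T))⁻¹ * (4*T*(Real.sqrt 2 * Real.sqrt (2*π*T)))
            = 4*T*Real.sqrt 2 * ((Real.sqrt (2*π*T))⁻¹ * Real.sqrt (2*π*T)) by ring,
          inv_mul_cancel₀ h2.ne', mul_one]
        nlinarith [Real.sq_sqrt (by norm_num : (0:ℝ) ≤ 2), Real.sqrt_nonneg 2, hT]

lemma gaussian_abs_eq (hT : 0 < T) :
    ∫ y, |y| ∂(gaussianReal 0 T.toNNReal) = Real.sqrt (2/π) * Real.sqrt T := by
  have hb2 : 0 < (2*T)⁻¹ := by positivity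
  rw [gaussian_integral_eq hT]
  have key : (fun y : ℝ => gaussianPDFReal 0 T.toNNReal y * |y|)
      = fun y => (Real.sqrt (2*π*T))⁻¹ * ((fun t => t * rexp (-(2*T)⁻¹ * t^2)) |y|) := by
    funext y
    rw [gaussian_pdf_eq hT]
    simp only [sq_abs]
    ring
  rw [key, integral_const_mul]
  have h4 : ∫ a : ℝ, (fun t => t * rexp (-(2*T)⁻¹ * t^2)) |a|
      = 2 * ∫ x in Set.Ioi (0:ℝ), x * rexp (-(2*T)⁻¹ * x^2) :=
    integral_comp_abs (f := fun t => t * rexp (-(2*T)⁻¹ * t^2))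
  rw [h4, integral_Ioi_mul_exp_neg_mul_sq hb2]
  have h1 : (2*(2*T)⁻¹)⁻¹ = T := by field_simp
  rw [h1]
  have h2 : 0 ≤ (Real.sqrt (2*π*T))⁻¹ * (2*T) := by positivity
  have h3 : 0 ≤ Real.sqrt (2/π) * Real.sqrt T := by positivity
  refine (sq_eq_sq₀ h2 h3).mp ?_
  have e1 : ((Real.sqrt (2*π*T))⁻¹ * (2*T))^2 = (2*π*T)⁻¹ * (2*T)^2 := by
    rw [mul_pow, inv_pow, Real.sq_sqrt (by positivity : (0:ℝ) ≤ 2*π*T)]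
  have e2 : (Real.sqrt (2/π) * Real.sqrt T)^2 = (2/π) * T := by
    rw [mul_pow, Real.sq_sqrt (by positivity : (0:ℝ) ≤ 2/π), Real.sq_sqrt hT.le]
  rw [e1, e2]
  have hπ : π ≠ 0 := pi_ne_zero
  have hT' : T ≠ 0 := hT.ne'
  field_simp

lemma gaussian_abs_integrable (hT : 0 < T) :
    Integrable (fun y : ℝ => |y|) (gaussianReal 0 T.toNNReal) := by
  refine ((integrable_const (1:ℝ)).add (gaussian_sq_integrable hT)).mono'
    measurable_abs.aestronglyMeasurable ?_
  filter_upwards with y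
  rw [Real.norm_eq_abs, abs_abs]
  simp only [Pi.add_apply]
  nlinarith [sq_nonneg (|y| - 1), sq_abs y, abs_nonneg y]

end Gauss

/-- Sub-diffusive scaling of rounded Brownian motion: with `X` uniform on
`[−1/2, 1/2]` and `Y` Gaussian with mean `0` and variance `T`,
`V(T) = E[(round(X + Y))²]` satisfies `V(T)/√T → √(2/π)` as `T → 0⁺`. -/
theorem rounded_brownian_variance_scaling :
    Filter.Tendsto
      (fun T : ℝ =>
        (∫ x in Set.Icc (-(1 / 2) : ℝ) (1 / 2),
            ∫ y, ((round (x + y) : ℝ)) ^ 2 ∂(gaussianReal 0 T.toNNReal))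
          / Real.sqrt T)
      (nhdsWithin 0 (Set.Ioi 0)) (nhds (Real.sqrt (2 / π))) := by
  set V : ℝ → ℝ := fun T =>
    ∫ x in Set.Icc (-(1 / 2) : ℝ) (1 / 2),
      ∫ y, ((round (x + y) : ℝ)) ^ 2 ∂(gaussianReal 0 T.toNNReal) with hV
  have key : ∀ T : ℝ, T ∈ Set.Ioi (0:ℝ) →
      |V T / Real.sqrt T - Real.sqrt (2/π)| ≤ 30 * Real.sqrt T := by
    intro T hT
    replace hT : 0 < T := hT
    set ν := gaussianReal 0 T.toNNReal with hν
    have hmeasF : Measurable (fun p : ℝ × ℝ => ((round (p.1 + p.2) : ℤ) : ℝ) ^ 2) :=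
      (measurable_round_real.comp (measurable_fst.add measurable_snd)).pow_const 2
    have hint_sq : Integrable (fun y : ℝ => y ^ 2) ν := gaussian_sq_integrable hT
    have hprod : Integrable (Function.uncurry fun x y => ((round (x + y) : ℤ) : ℝ) ^ 2)
        ((volume.restrict (Set.Icc (-(1/2) : ℝ) (1/2))).prod ν) := by
      have hg : Integrable (fun y : ℝ => 2 * y ^ 2 + 2) ν :=
        (hint_sq.const_mul 2).add (integrable_const 2)
      have hc : Integrable (fun _ : ℝ => (1:ℝ))
          (volume.restrict (Set.Icc (-(1/2) : ℝ) (1/2))) := integrable_const 1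
      have hbound := hc.mul_prod hg
      refine hbound.mono' hmeasF.aestronglyMeasurable ?_
      have hre : (volume.restrict (Set.Icc (-(1/2) : ℝ) (1/2))).prod ν
          = (volume.prod ν).restrict ((Set.Icc (-(1/2) : ℝ) (1/2)) ×ˢ Set.univ) := by
        rw [← Measure.prod_restrict, Measure.restrict_univ]
      rw [hre]
      filter_upwards [ae_restrict_mem (measurableSet_Icc.prod MeasurableSet.univ)] with p hp
      obtain ⟨hp1, -⟩ := hp
      rw [Function.uncurry, Real.norm_eq_abs, abs_pow]
      have h1 : |((round (p.1 + p.2) : ℤ) : ℝ)| ≤ |p.2| + 1 := by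
        have ha : |p.1 + p.2 - round (p.1 + p.2)| ≤ 1/2 := abs_sub_round (p.1 + p.2)
        have hb : |((round (p.1 + p.2) : ℤ) : ℝ)| ≤ |p.1 + p.2| + 1/2 := by
          have := abs_add_le (p.1 + p.2) (((round (p.1 + p.2) : ℤ) : ℝ) - (p.1 + p.2))
          simp only [add_sub_cancel] at this
          rw [abs_sub_comm] at ha
          linarith
        have hx1 : |p.1| ≤ 1/2 := by
          rw [abs_le]; exact ⟨by linarith [hp1.1], hp1.2⟩
        have := abs_add_le p.1 p.2
        linarith
      calc |((round (p.1 + p.2) : ℤ) : ℝ)| ^ 2 ≤ (|p.2| + 1) ^ 2 :=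
            pow_le_pow_left₀ (abs_nonneg _) h1 2
        _ ≤ 1 * (2 * p.2 ^ 2 + 2) := by
            nlinarith [sq_nonneg (|p.2| - 1), sq_abs p.2, abs_nonneg p.2]
    have hswap := MeasureTheory.integral_integral_swap
      (f := fun x y => ((round (x + y) : ℤ) : ℝ) ^ 2) hprod
    set g : ℝ → ℝ :=
      fun y => ∫ x in Set.Icc (-(1/2) : ℝ) (1/2), ((round (x + y) : ℤ) : ℝ) ^ 2 with hg
    have hg_int : Integrable g ν := by
      have h := (hprod.swap).integral_prod_left
      simpa [Function.uncurry, Function.comp, hg] using h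
    have habs_int : Integrable (fun y : ℝ => |y|) ν := gaussian_abs_integrable hT
    have hdiff : abs ((∫ y, g y ∂ν) - ∫ y, |y| ∂ν) ≤ 30 * T := by
      rw [← integral_sub hg_int habs_int]
      calc abs (∫ y, (g y - |y|) ∂ν)
          ≤ ∫ y, abs (g y - |y|) ∂ν := by
            have h := norm_integral_le_integral_norm (μ := ν) (f := fun y => g y - |y|)
            simpa [Real.norm_eq_abs] using h
        _ ≤ ∫ y, 5 * y ^ 2 ∂ν := by
            refine integral_mono (hg_int.sub habs_int).abs (hint_sq.const_mul 5) ?_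
            intro y
            exact round_sq_inner_abs_le y
        _ = 5 * ∫ y, y ^ 2 ∂ν := integral_const_mul 5 _
        _ ≤ 5 * (6 * T) := by
            have := gaussian_sq_le hT
            nlinarith
        _ = 30 * T := by ring
    have habs_eq : ∫ y, |y| ∂ν = Real.sqrt (2/π) * Real.sqrt T := gaussian_abs_eq hT
    have hVeq : V T = ∫ y, g y ∂ν := hswap
    have hsT : 0 < Real.sqrt T := Real.sqrt_pos.mpr hT
    have heq : V T / Real.sqrt T - Real.sqrt (2/π)
        = (V T - Real.sqrt (2/π) * Real.sqrt T) / Real.sqrt T := by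
      field_simp
    rw [heq, abs_div, abs_of_pos hsT, div_le_iff₀ hsT]
    have hmul : 30 * Real.sqrt T * Real.sqrt T = 30 * T := by
      rw [mul_assoc, Real.mul_self_sqrt hT.le]
    rw [hmul, hVeq, ← habs_eq]
    exact hdiff
  have h0 : Filter.Tendsto (fun T : ℝ => 30 * Real.sqrt T)
      (nhdsWithin 0 (Set.Ioi 0)) (nhds 0) := by
    have h1 : Filter.Tendsto (fun T : ℝ => 30 * Real.sqrt T) (nhds 0) (nhds (30 * Real.sqrt 0)) :=
      ((continuous_const.mul Real.continuous_sqrt).tendsto 0)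
    rw [Real.sqrt_zero, mul_zero] at h1
    exact h1.mono_left nhdsWithin_le_nhds
  have hto : Filter.Tendsto (fun T : ℝ => V T / Real.sqrt T - Real.sqrt (2/π))
      (nhdsWithin 0 (Set.Ioi 0)) (nhds 0) := by
    refine squeeze_zero_norm' ?_ h0
    filter_upwards [self_mem_nhdsWithin] with T hT
    rw [Real.norm_eq_abs]
    exact key T hT
  have hfinal := hto.add_const (Real.sqrt (2/π))
  rw [zero_add] at hfinal
  have hfun : (fun T : ℝ => V T / Real.sqrt T - Real.sqrt (2/π) + Real.sqrt (2/π))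
      = fun T : ℝ => V T / Real.sqrt T := by
    funext T
    ring
  rw [hfun] at hfinal
  exact hfinal
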